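/- In the ternary Grassmann algebra G_N, an odd permutation of the factors in a ternary product leads to an independent quantity: for pairwise distinct indices a, b, c, the two elements θ a * θ b * θ c and θ a * θ c * θ b are linearly independent over ℂ. -/

import Mathlib

/-- The ternary commutation relations on the free `ℂ`-algebra on `N` generators.
`RingQuot (ternaryRel j N)` is the ternary Grassmann algebra `G_N`: the quotient of
the free algebra by the two-sided ideal generated by the elements
`X a * X b * X c − j • (X b * X c * X a)`. -/
inductive ternaryRel (j : ℂ) (N : ℕ) :
    FreeAlgebra ℂ (Fin N) → FreeAlgebra ℂ (Fin N) → Prop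
  | rel (a b c : Fin N) : ternaryRel j N
      (FreeAlgebra.ι ℂ a * FreeAlgebra.ι ℂ b * FreeAlgebra.ι ℂ c)
      (j • (FreeAlgebra.ι ℂ b * FreeAlgebra.ι ℂ c * FreeAlgebra.ι ℂ a))

/-- The generator `θ a` of the ternary Grassmann algebra, i.e. the image of `X a`. -/
noncomputable def theta (j : ℂ) (N : ℕ) (a : Fin N) : RingQuot (ternaryRel j N) :=
  RingQuot.mkAlgHom ℂ (ternaryRel j N) (FreeAlgebra.ι ℂ a)

/-- Auxiliary coefficient function on words, supported on the cyclic class of `[a,b,c]`. -/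
noncomputable def glist (j : ℂ) {N : ℕ} (a b c : Fin N) (l : List (Fin N)) : ℂ :=
  if l = [a, b, c] then 1 else if l = [b, c, a] then j ^ 2 else
    if l = [c, a, b] then j else 0

lemma glist_len {j : ℂ} {N : ℕ} {a b c : Fin N} {l : List (Fin N)}
    (h : l.length ≠ 3) : glist j a b c l = 0 := by
  unfold glist
  split_ifs with h1 h2 h3 <;> first | rfl | (subst_vars; simp at h)

lemma glist_cyclic {j : ℂ} {N : ℕ} (hj : j ^ 3 = 1) {a b c : Fin N}
    (hab : a ≠ b) (hac : a ≠ c) (hbc : b ≠ c) (u v w : Fin N) :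
    glist j a b c [u, v, w] = j * glist j a b c [v, w, u] := by
  unfold glist
  split_ifs with h1 h2 h3 h4 h5 h6 h7 h8 h9 h10 h11 h12 <;>
    simp_all only [List.cons.injEq, and_true, and_false, false_and,
      and_self, not_true_eq_false, not_false_eq_true]
  all_goals try ring
  all_goals linear_combination -hj

/-- The coefficient function on the free monoid. -/
noncomputable def gF (j : ℂ) {N : ℕ} (a b c : Fin N) (m : FreeMonoid (Fin N)) : ℂ :=
  glist j a b c m.toList

lemma gF_context {j : ℂ} {N : ℕ} (hj : j ^ 3 = 1) {a b c : Fin N}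
    (hab : a ≠ b) (hac : a ≠ c) (hbc : b ≠ c) (u v w : Fin N)
    (s t : FreeMonoid (Fin N)) :
    gF j a b c (s * (FreeMonoid.of u * FreeMonoid.of v * FreeMonoid.of w) * t)
      = j * gF j a b c (s * (FreeMonoid.of v * FreeMonoid.of w * FreeMonoid.of u) * t) := by
  have L : ∀ x y z : Fin N,
      (s * (FreeMonoid.of x * FreeMonoid.of y * FreeMonoid.of z) * t).toList
        = s.toList ++ ([x, y, z] ++ t.toList) := by
    intro x y z
    simp [FreeMonoid.toList_mul, FreeMonoid.toList_of]
  rcases Nat.eq_zero_or_pos (s.toList.length + t.toList.length) with h0 | hpos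
  · have hs : s.toList = [] := List.length_eq_zero_iff.mp (by omega)
    have ht : t.toList = [] := List.length_eq_zero_iff.mp (by omega)
    unfold gF
    rw [L, L, hs, ht]
    simpa using glist_cyclic hj hab hac hbc u v w
  · unfold gF
    rw [glist_len (by rw [L]; simp; omega), glist_len (by rw [L]; simp; omega), mul_zero]

/-- The linear functional on the monoid algebra. -/
noncomputable def GG (j : ℂ) {N : ℕ} (a b c : Fin N) :
    MonoidAlgebra ℂ (FreeMonoid (Fin N)) →ₗ[ℂ] ℂ :=
  (Finsupp.linearCombination ℂ (gF j a b c)).comp (MonoidAlgebra.coeffLinearEquiv ℂ).toLinearMap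

lemma GG_single (j : ℂ) {N : ℕ} (a b c : Fin N) (m : FreeMonoid (Fin N)) (r : ℂ) :
    GG j a b c (MonoidAlgebra.single m r) = r * gF j a b c m := by
  show Finsupp.linearCombination ℂ (gF j a b c) (Finsupp.single m r) = r * gF j a b c m
  rw [Finsupp.linearCombination_single, smul_eq_mul]

lemma GG_mul_single (j : ℂ) {N : ℕ} (a b c : Fin N) (w₁ w₂ : FreeMonoid (Fin N))
    (h : ∀ s t : FreeMonoid (Fin N), gF j a b c (s * w₁ * t) = j * gF j a b c (s * w₂ * t)) :
    ∀ P Q : MonoidAlgebra ℂ (FreeMonoid (Fin N)),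
      GG j a b c (P * MonoidAlgebra.single w₁ 1 * Q)
        = j * GG j a b c (P * MonoidAlgebra.single w₂ 1 * Q) := by
  intro P
  induction P using MonoidAlgebra.induction_on with
  | of s =>
      intro Q
      induction Q using MonoidAlgebra.induction_on with
      | of t =>
          rw [MonoidAlgebra.of_apply, MonoidAlgebra.of_apply,
            MonoidAlgebra.single_mul_single, MonoidAlgebra.single_mul_single,
            MonoidAlgebra.single_mul_single, MonoidAlgebra.single_mul_single,
            GG_single, GG_single, h s t]
          ring
      | add f g hf hg => rw [mul_add, map_add, mul_add, map_add, hf, hg, mul_add]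
      | smul r f hf =>
          rw [mul_smul_comm, map_smul, mul_smul_comm, map_smul, hf, smul_eq_mul, smul_eq_mul]
          ring
  | add f g hf hg =>
      intro Q
      rw [add_mul, add_mul, add_mul, add_mul, map_add, map_add, hf, hg, mul_add]
  | smul r f hf =>
      intro Q
      rw [smul_mul_assoc, smul_mul_assoc, map_smul, smul_mul_assoc, smul_mul_assoc,
        map_smul, hf, smul_eq_mul, smul_eq_mul]
      ring

/-- The linear functional on the free algebra. -/
noncomputable def FF (j : ℂ) {N : ℕ} (a b c : Fin N) :
    FreeAlgebra ℂ (Fin N) →ₗ[ℂ] ℂ :=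
  (GG j a b c).comp (FreeAlgebra.equivMonoidAlgebraFreeMonoid).toLinearMap

lemma e_triple {N : ℕ} (x y z : Fin N) :
    FreeAlgebra.equivMonoidAlgebraFreeMonoid
        (FreeAlgebra.ι ℂ x * FreeAlgebra.ι ℂ y * FreeAlgebra.ι ℂ z)
      = MonoidAlgebra.single (FreeMonoid.of x * FreeMonoid.of y * FreeMonoid.of z) 1 := by
  simp [FreeAlgebra.equivMonoidAlgebraFreeMonoid, MonoidAlgebra.single_mul_single,
    MonoidAlgebra.of_apply]

lemma FF_triple (j : ℂ) {N : ℕ} (a b c : Fin N) (x y z : Fin N) :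
    FF j a b c (FreeAlgebra.ι ℂ x * FreeAlgebra.ι ℂ y * FreeAlgebra.ι ℂ z)
      = glist j a b c [x, y, z] := by
  have : gF j a b c (FreeMonoid.of x * FreeMonoid.of y * FreeMonoid.of z)
      = glist j a b c [x, y, z] := by
    unfold gF
    congr 1
  rw [FF]
  simp only [LinearMap.comp_apply, AlgEquiv.toLinearMap_apply, e_triple, GG_single, one_mul, this]

lemma FF_rel {j : ℂ} {N : ℕ} (hj : j ^ 3 = 1) {a b c : Fin N}
    (hab : a ≠ b) (hac : a ≠ c) (hbc : b ≠ c) :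
    ∀ x y, RingQuot.Rel (ternaryRel j N) x y → FF j a b c x = FF j a b c y := by
  have main : ∀ x y, RingQuot.Rel (ternaryRel j N) x y →
      ∀ p q, FF j a b c (p * x * q) = FF j a b c (p * y * q) := by
    intro x y hxy
    induction hxy with
    | of h =>
        obtain ⟨u, v, w⟩ := h
        intro p q
        have hs : p * (j • (FreeAlgebra.ι ℂ v * FreeAlgebra.ι ℂ w * FreeAlgebra.ι ℂ u)) * q
            = j • (p * (FreeAlgebra.ι ℂ v * FreeAlgebra.ι ℂ w * FreeAlgebra.ι ℂ u) * q) := by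
          rw [mul_smul_comm, smul_mul_assoc]
        rw [hs, map_smul, smul_eq_mul]
        have key : ∀ x' y' z' : Fin N,
            FreeAlgebra.equivMonoidAlgebraFreeMonoid
                (p * (FreeAlgebra.ι ℂ x' * FreeAlgebra.ι ℂ y' * FreeAlgebra.ι ℂ z') * q)
              = FreeAlgebra.equivMonoidAlgebraFreeMonoid p
                  * MonoidAlgebra.single (FreeMonoid.of x' * FreeMonoid.of y' * FreeMonoid.of z') 1
                  * FreeAlgebra.equivMonoidAlgebraFreeMonoid q := by
          intro x' y' z'
          rw [map_mul, map_mul, e_triple]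
        simp only [FF, LinearMap.comp_apply, AlgEquiv.toLinearMap_apply]
        rw [key u v w, key v w u]
        exact GG_mul_single j a b c _ _
          (fun s t => gF_context hj hab hac hbc u v w s t) _ _
    | add_left _ ih =>
        intro p q
        simp only [mul_add, add_mul, map_add]
        rw [ih]
    | mul_left _ ih =>
        rename_i x' y' z' _
        intro p q
        have e1 : p * (x' * z') * q = p * x' * (z' * q) := by
          rw [← mul_assoc, mul_assoc (p * x')]
        have e2 : p * (y' * z') * q = p * y' * (z' * q) := by
          rw [← mul_assoc, mul_assoc (p * y')]
        rw [e1, e2, ih]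
    | mul_right _ ih =>
        rename_i x' y' z' _
        intro p q
        have e1 : p * (x' * y') * q = p * x' * y' * q := by rw [← mul_assoc]
        have e2 : p * (x' * z') * q = p * x' * z' * q := by rw [← mul_assoc]
        rw [e1, e2]
        exact ih (p * x') q
  intro x y h
  simpa using main x y h 1 1

lemma FF_vanish {j : ℂ} {N : ℕ} (hj : j ^ 3 = 1) {a b c : Fin N}
    (hab : a ≠ b) (hac : a ≠ c) (hbc : b ≠ c) (u : FreeAlgebra ℂ (Fin N))
    (hu : RingQuot.mkAlgHom ℂ (ternaryRel j N) u = 0) : FF j a b c u = 0 := by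
  set fb : RingQuot (ternaryRel j N) → ℂ :=
    fun z => Quot.lift (FF j a b c) (FF_rel hj hab hac hbc) z.toQuot with hfb
  have hmk : ∀ x : FreeAlgebra ℂ (Fin N),
      RingQuot.mkAlgHom ℂ (ternaryRel j N) x = ⟨Quot.mk _ x⟩ := by
    intro x
    have hco : RingQuot.mkAlgHom ℂ (ternaryRel j N) x
        = RingQuot.mkRingHom (ternaryRel j N) x := by
      rw [← RingQuot.mkAlgHom_coe ℂ (ternaryRel j N)]
      rfl
    rw [hco, RingQuot.mkRingHom_def]
    rfl
  have h1 : fb (RingQuot.mkAlgHom ℂ (ternaryRel j N) u) = FF j a b c u := by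
    rw [hmk]
  have h0 : fb 0 = 0 := by
    rw [← RingQuot.zero_quot]
    show FF j a b c 0 = 0
    exact map_zero _
  rw [← h1, hu, h0]

/-- in the ternary Grassmann algebra `G_N`, an odd permutation of the
factors in a ternary product leads to an independent quantity: for pairwise distinct
indices `a, b, c` the elements `θ a * θ b * θ c` and `θ a * θ c * θ b` are linearly
independent over `ℂ`. -/
theorem ternaryGrassmann_odd_permutation_linearIndependent
    (N : ℕ) (j : ℂ) (hj : j ^ 3 = 1) (hj1 : j ≠ 1)
    (a b c : Fin N) (hab : a ≠ b) (hac : a ≠ c) (hbc : b ≠ c) :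
    LinearIndependent ℂ
      ![theta j N a * theta j N b * theta j N c,
        theta j N a * theta j N c * theta j N b] := by
  rw [LinearIndependent.pair_iff]
  intro s t hst
  set P : FreeAlgebra ℂ (Fin N) := FreeAlgebra.ι ℂ a * FreeAlgebra.ι ℂ b * FreeAlgebra.ι ℂ c
    with hP
  set Q : FreeAlgebra ℂ (Fin N) := FreeAlgebra.ι ℂ a * FreeAlgebra.ι ℂ c * FreeAlgebra.ι ℂ b
    with hQ
  have hU : RingQuot.mkAlgHom ℂ (ternaryRel j N) (s • P + t • Q) = 0 := by
    rw [map_add, map_smul, map_smul, hP, hQ, map_mul, map_mul, map_mul, map_mul]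
    exact hst
  have h1 := FF_vanish hj hab hac hbc _ hU
  have h2 := FF_vanish hj hac hab hbc.symm _ hU
  rw [map_add, map_smul, map_smul, smul_eq_mul, smul_eq_mul, hP, hQ,
    FF_triple, FF_triple] at h1 h2
  have gP1 : glist j a b c [a, b, c] = 1 := by
    rw [glist, if_pos rfl]
  have gQ1 : glist j a b c [a, c, b] = 0 := by
    simp [glist, List.cons.injEq, hab, hac, hbc, hab.symm, hac.symm, hbc.symm]
  have gP2 : glist j a c b [a, b, c] = 0 := by
    simp [glist, List.cons.injEq, hab, hac, hbc, hab.symm, hac.symm, hbc.symm]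
  have gQ2 : glist j a c b [a, c, b] = 1 := by
    rw [glist, if_pos rfl]
  rw [gP1, gQ1] at h1
  rw [gP2, gQ2] at h2
  constructor
  · simpa using h1
  · simpa using h2
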